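/- (Observed-component bound after the EnKF-AI update) In the EnKF-AI setting described in the context, writing the updated member as V⁽ᵏ⁾ = (X⁽ᵏ⁾, Y⁽ᵏ⁾) with X⁽ᵏ⁾ ∈ ℝ^q, for every k = 1,…,K one has |X⁽ᵏ⁾|² ≤ 2ρ₀⁻¹·K·max{M₁², ρ₀⁻²c_φ⁻²} + 2ρ₀⁻¹·|Z⁽ᵏ⁾|². -/

import Mathlib

open Matrix BigOperators

noncomputable def enormSq {ι : Type*} [Fintype ι] (v : ι → ℝ) : ℝ := ∑ i, v i ^ 2

noncomputable def enorm {ι : Type*} [Fintype ι] (v : ι → ℝ) : ℝ := Real.sqrt (∑ i, v i ^ 2)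

noncomputable def specNorm {ι κ : Type*} [Fintype ι] [Fintype κ] [DecidableEq κ]
    (M : Matrix ι κ ℝ) : ℝ :=
  ‖LinearMap.toContinuousLinearMap (Matrix.toEuclideanLin M)‖

noncomputable def adaptiveInflation (cphi M₁ M₂ x y : ℝ) : ℝ :=
  if x > M₁ ∨ y > M₂ then cphi * x * (1 + y) else 0

lemma enormSq_nonneg {ι : Type*} [Fintype ι] (v : ι → ℝ) : 0 ≤ enormSq v :=
  Finset.sum_nonneg fun i _ => sq_nonneg _

lemma dot_vecMulVec {n : Type*} [Fintype n] (a w : n → ℝ) :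
    w ⬝ᵥ (Matrix.vecMulVec a a).mulVec w = (a ⬝ᵥ w) ^ 2 := by
  simp only [Matrix.mulVec, Matrix.vecMulVec_apply, dotProduct, sq]
  rw [Finset.sum_mul]
  refine Finset.sum_congr rfl fun i _ => ?_
  rw [Finset.mul_sum, Finset.mul_sum]
  exact Finset.sum_congr rfl fun j _ => by ring

lemma mulVec_fromColumns_diag {q p : ℕ} (h : Fin q → ℝ) (v : (Fin q ⊕ Fin p) → ℝ) (i : Fin q) :
    ((Matrix.fromCols (Matrix.diagonal h) (0 : Matrix (Fin q) (Fin p) ℝ)).mulVec v) i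
      = h i * v (Sum.inl i) := by
  simp [Matrix.mulVec, dotProduct, Fintype.sum_sum_type, Matrix.fromCols,
    Matrix.diagonal, Matrix.of_apply, ite_mul, zero_mul, Finset.sum_ite_eq]

lemma sum_mulVec' {n m : Type*} [Fintype n] [Fintype m] {ι : Type*} (s : Finset ι)
    (M : ι → Matrix m n ℝ) (w : n → ℝ) :
    (∑ k ∈ s, M k) *ᵥ w = ∑ k ∈ s, M k *ᵥ w := by
  ext i
  simp only [Matrix.mulVec, dotProduct, Matrix.sum_apply, Finset.sum_mul, Finset.sum_apply]
  exact Finset.sum_comm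

lemma dot_sum' {n : Type*} [Fintype n] {ι : Type*} (s : Finset ι)
    (f : ι → n → ℝ) (w : n → ℝ) :
    w ⬝ᵥ (∑ k ∈ s, f k) = ∑ k ∈ s, w ⬝ᵥ f k := by
  simp only [dotProduct, Finset.sum_apply, Finset.mul_sum]
  exact Finset.sum_comm

lemma dot_sum_mulVec {n : Type*} [Fintype n] {ι : Type*} (s : Finset ι)
    (M : ι → Matrix n n ℝ) (w : n → ℝ) :
    w ⬝ᵥ (∑ k ∈ s, M k) *ᵥ w = ∑ k ∈ s, w ⬝ᵥ (M k) *ᵥ w := by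
  rw [sum_mulVec', dot_sum']

set_option maxHeartbeats 2000000 in
/-- **Observed-component bound after the EnKF-AI update.** In the EnKF-AI setting
(state space `(Fin q ⊕ Fin p) → ℝ` with observed components indexed by `Fin q`,
`H = (H₀, 0)`, `H₀ = diag(h)` with `h_i > 0`, `ρ₀` the minimum eigenvalue of `H₀H₀ᵀ`,
statistics `Θ, Ξ`, inflation strength `λ ≥ φ(Θ,Ξ)`, inflated covariance `C̃ = Ĉ + λI`,
analysis update `V⁽ᵏ⁾ = V̂⁽ᵏ⁾ − C̃Hᵀ(I + HC̃Hᵀ)⁻¹(HV̂⁽ᵏ⁾ − Z⁽ᵏ⁾)`), writing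
`V⁽ᵏ⁾ = (X⁽ᵏ⁾, Y⁽ᵏ⁾)`, the observed component satisfies
`|X⁽ᵏ⁾|² ≤ 2ρ₀⁻¹ K max {M₁², ρ₀⁻²c_φ⁻²} + 2ρ₀⁻¹ |Z⁽ᵏ⁾|²`. -/
theorem enkf_ai_observed_component_bound {q p K : ℕ} (hK : 2 ≤ K)
    (h : Fin q → ℝ) (hpos : ∀ i, 0 < h i)
    (H : Matrix (Fin q) (Fin q ⊕ Fin p) ℝ)
    (hH : H = Matrix.fromCols (Matrix.diagonal h) 0)
    (ρ₀ : ℝ) (hρ₀ : IsLeast (Set.range fun i => h i ^ 2) ρ₀)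
    (cphi M₁ M₂ : ℝ) (hcphi : 0 < cphi) (hM₁ : 0 < M₁) (hM₂ : 0 < M₂)
    (Vhat : Fin K → (Fin q ⊕ Fin p) → ℝ) (Z : Fin K → Fin q → ℝ)
    (Vbar : (Fin q ⊕ Fin p) → ℝ) (hVbar : Vbar = (K : ℝ)⁻¹ • ∑ k, Vhat k)
    (Chat : Matrix (Fin q ⊕ Fin p) (Fin q ⊕ Fin p) ℝ)
    (hChat : Chat = ((K : ℝ) - 1)⁻¹ • ∑ k, vecMulVec (Vhat k - Vbar) (Vhat k - Vbar))
    (Bhat : Matrix (Fin q) (Fin p) ℝ)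
    (hBhat : Bhat = ((K : ℝ) - 1)⁻¹ •
      ∑ k, vecMulVec (fun i => (Vhat k - Vbar) (Sum.inl i)) (fun j => (Vhat k - Vbar) (Sum.inr j)))
    (Θ Ξ : ℝ)
    (hΘ : Θ = Real.sqrt ((K : ℝ)⁻¹ * ∑ k, enormSq (H.mulVec (Vhat k) - Z k)))
    (hΞ : Ξ = specNorm Bhat)
    (lam : ℝ) (hlam0 : 0 ≤ lam) (hlam : adaptiveInflation cphi M₁ M₂ Θ Ξ ≤ lam)
    (Ctil : Matrix (Fin q ⊕ Fin p) (Fin q ⊕ Fin p) ℝ) (hCtil : Ctil = Chat + lam • 1)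
    (V : Fin K → (Fin q ⊕ Fin p) → ℝ)
    (hV : ∀ k, V k = Vhat k
      - (Ctil * Hᵀ * (1 + H * Ctil * Hᵀ)⁻¹).mulVec (H.mulVec (Vhat k) - Z k)) :
    ∀ k, enormSq (fun i => V k (Sum.inl i))
      ≤ 2 * ρ₀⁻¹ * (K : ℝ) * max (M₁ ^ 2) (ρ₀⁻¹ ^ 2 * cphi⁻¹ ^ 2)
        + 2 * ρ₀⁻¹ * enormSq (Z k) := by
  obtain ⟨⟨i₀, hi₀⟩, hρlb⟩ := hρ₀
  have hρpos : 0 < ρ₀ := hi₀ ▸ pow_pos (hpos i₀) 2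
  have hρle : ∀ i, ρ₀ ≤ h i ^ 2 := fun i => hρlb ⟨i, rfl⟩
  have hKpos : (0 : ℝ) < K := by exact_mod_cast Nat.lt_of_lt_of_le Nat.zero_lt_two hK
  set S : Matrix (Fin q) (Fin q) ℝ := H * Ctil * Hᵀ with hSdef
  set A : Matrix (Fin q) (Fin q) ℝ := 1 + S with hAdef
  clear_value A
  clear_value S
  -- transposes
  have hChatT : Chatᵀ = Chat := by
    rw [hChat, Matrix.transpose_smul, Matrix.transpose_sum]
    congr 1
    refine Finset.sum_congr rfl fun k _ => ?_
    ext i j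
    simp [Matrix.transpose_apply, Matrix.vecMulVec_apply, mul_comm]
  have hCtilT : Ctilᵀ = Ctil := by
    rw [hCtil, Matrix.transpose_add, hChatT, Matrix.transpose_smul, Matrix.transpose_one]
  have hAT : Aᵀ = A := by
    rw [hAdef, Matrix.transpose_add, Matrix.transpose_one, hSdef, Matrix.transpose_mul,
      Matrix.transpose_mul, Matrix.transpose_transpose, hCtilT, Matrix.mul_assoc]
  -- quadratic form of Chat is nonnegative
  have hChatQF : ∀ w : Fin q ⊕ Fin p → ℝ, 0 ≤ w ⬝ᵥ Chat.mulVec w := by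
    intro w
    rw [hChat, Matrix.smul_mulVec, dotProduct_smul]
    refine mul_nonneg ?_ ?_
    · rw [inv_nonneg]
      have : (2:ℝ) ≤ K := by exact_mod_cast hK
      linarith
    · rw [dot_sum_mulVec]
      refine Finset.sum_nonneg fun k _ => ?_
      rw [dot_vecMulVec]
      exact sq_nonneg _
  -- H * Hᵀ = diagonal (h^2)
  have hHHT : H * Hᵀ = Matrix.diagonal (fun i => h i ^ 2) := by
    rw [hH, Matrix.transpose_fromCols, Matrix.transpose_zero, Matrix.diagonal_transpose,
      Matrix.fromCols_mul_fromRows, Matrix.zero_mul, add_zero, Matrix.diagonal_mul_diagonal]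
    exact congrArg Matrix.diagonal (funext fun i => (sq (h i)).symm)
  -- quadratic form lower bound
  have hQF : ∀ x : Fin q → ℝ, (1 + lam * ρ₀) * enormSq x ≤ x ⬝ᵥ A *ᵥ x := by
    intro x
    have hdx : x ⬝ᵥ x = enormSq x := by simp [dotProduct, enormSq, sq]
    have hA_mul : A *ᵥ x = x + S *ᵥ x := by rw [hAdef, Matrix.add_mulVec, Matrix.one_mulVec]
    have hSsplit : S = H * Chat * Hᵀ + lam • (H * Hᵀ) := by
      rw [hSdef, hCtil, Matrix.mul_add, Matrix.add_mul, Matrix.mul_smul, Matrix.smul_mul,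
        Matrix.mul_one]
    have h1 : x ⬝ᵥ (H * Chat * Hᵀ) *ᵥ x = (x ᵥ* H) ⬝ᵥ Chat *ᵥ (x ᵥ* H) := by
      rw [Matrix.mul_assoc, ← Matrix.mulVec_mulVec, ← Matrix.mulVec_mulVec,
        Matrix.dotProduct_mulVec, Matrix.mulVec_transpose]
    have h2 : x ⬝ᵥ (lam • (H * Hᵀ)) *ᵥ x = lam * ∑ i, h i ^ 2 * x i ^ 2 := by
      rw [Matrix.smul_mulVec, dotProduct_smul, smul_eq_mul, hHHT]
      congr 1
      refine Finset.sum_congr rfl fun i _ => ?_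
      rw [Matrix.mulVec_diagonal]
      ring
    have h3 : lam * (ρ₀ * enormSq x) ≤ lam * ∑ i, h i ^ 2 * x i ^ 2 := by
      refine mul_le_mul_of_nonneg_left ?_ hlam0
      rw [enormSq, Finset.mul_sum]
      exact Finset.sum_le_sum fun i _ => mul_le_mul_of_nonneg_right (hρle i) (sq_nonneg _)
    have h4 := hChatQF (x ᵥ* H)
    rw [hA_mul, dotProduct_add, hdx, hSsplit, Matrix.add_mulVec, dotProduct_add, h1, h2]
    nlinarith [h3, h4]
  -- A is positive definite
  have hherm : A.IsHermitian := by
    rw [Matrix.IsHermitian, Matrix.conjTranspose_eq_transpose_of_trivial, hAT]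
  have hposdef : A.PosDef := by
    refine Matrix.PosDef.of_dotProduct_mulVec_pos hherm fun x hx => ?_
    have hex : 0 < enormSq x := by
      obtain ⟨i, hi⟩ := Function.ne_iff.mp hx
      have h5 : x i ^ 2 ≤ enormSq x :=
        Finset.single_le_sum (fun j _ => sq_nonneg (x j)) (Finset.mem_univ i)
      have h6 : 0 < x i ^ 2 := lt_of_le_of_ne (sq_nonneg _) (Ne.symm (pow_ne_zero 2 hi))
      linarith
    have hc : (0:ℝ) < 1 + lam * ρ₀ := by nlinarith
    simpa using lt_of_lt_of_le (mul_pos hc hex) (hQF x)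
  have hAinv : A * A⁻¹ = 1 := Matrix.mul_nonsing_inv A hposdef.det_pos.ne'.isUnit
  intro k
  set y : Fin q → ℝ := H *ᵥ Vhat k - Z k with hy
  set u : Fin q → ℝ := A⁻¹ *ᵥ y with hu
  clear_value u
  clear_value y
  have hAu : A *ᵥ u = y := by rw [hu, Matrix.mulVec_mulVec, hAinv, Matrix.one_mulVec]
  have hSu : S *ᵥ u = y - u := by
    have h5 : (1 + S) *ᵥ u = y := by rw [← hAdef]; exact hAu
    rw [Matrix.add_mulVec, Matrix.one_mulVec] at h5
    exact eq_sub_of_add_eq' h5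
  have hHV : H *ᵥ V k = Z k + u := by
    have h6 : H * (Ctil * Hᵀ * A⁻¹) = S * A⁻¹ := by
      simp only [hSdef, Matrix.mul_assoc]
    rw [hV k, ← hy, Matrix.mulVec_sub, Matrix.mulVec_mulVec, h6, ← Matrix.mulVec_mulVec, ← hu, hSu,
      hy]
    abel
  have hXcomp : ∀ i, h i * V k (Sum.inl i) = Z k i + u i := by
    intro i
    have h7 : (H *ᵥ V k) i = h i * V k (Sum.inl i) := by
      rw [hH]; exact mulVec_fromColumns_diag h (V k) i
    have h8 := congrFun hHV i
    rw [h7] at h8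
    exact h8
  -- bound on u
  have hcu : (1 + lam * ρ₀) * enormSq u ≤ u ⬝ᵥ y := by
    have h9 := hQF u
    rwa [hAu] at h9
  have hCS : (u ⬝ᵥ y) ^ 2 ≤ enormSq u * enormSq y := by
    simpa [dotProduct, enormSq] using Finset.sum_mul_sq_le_sq_mul_sq Finset.univ u y
  have hc1 : (1:ℝ) ≤ 1 + lam * ρ₀ := by nlinarith
  have hkey : (1 + lam * ρ₀)^2 * enormSq u ≤ enormSq y := by
    rcases eq_or_lt_of_le (enormSq_nonneg u) with h0 | h0
    · rw [← h0]
      simpa using enormSq_nonneg y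
    · have hd0 : (0:ℝ) ≤ u ⬝ᵥ y :=
        le_trans (mul_nonneg (by linarith) (enormSq_nonneg u)) hcu
      have h8 : ((1 + lam * ρ₀) * enormSq u)^2 ≤ (u ⬝ᵥ y)^2 :=
        pow_le_pow_left₀ (mul_nonneg (by linarith) (enormSq_nonneg u)) hcu 2
      refine le_of_mul_le_mul_right ?_ h0
      calc (1 + lam * ρ₀)^2 * enormSq u * enormSq u
          = ((1 + lam * ρ₀) * enormSq u)^2 := by ring
        _ ≤ (u ⬝ᵥ y)^2 := h8
        _ ≤ enormSq u * enormSq y := hCS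
        _ = enormSq y * enormSq u := mul_comm _ _
  have hu_le_y : enormSq u ≤ enormSq y := by
    have h16 : enormSq u ≤ (1 + lam * ρ₀)^2 * enormSq u :=
      le_mul_of_one_le_left (enormSq_nonneg u) (by simpa using pow_le_pow_left₀ zero_le_one hc1 2)
    exact le_trans h16 hkey
  -- Θ facts
  have hΘ0 : 0 ≤ Θ := hΘ ▸ Real.sqrt_nonneg _
  have hsum0 : 0 ≤ (K : ℝ)⁻¹ * ∑ j, enormSq (H *ᵥ Vhat j - Z j) :=
    mul_nonneg (inv_nonneg.mpr hKpos.le) (Finset.sum_nonneg fun j _ => enormSq_nonneg _)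
  have hΘsq : Θ^2 = (K : ℝ)⁻¹ * ∑ j, enormSq (H *ᵥ Vhat j - Z j) := by
    rw [hΘ]
    exact Real.sq_sqrt hsum0
  have hy_le : enormSq y ≤ (K:ℝ) * Θ^2 := by
    rw [hΘsq, ← mul_assoc, mul_inv_cancel₀ hKpos.ne', one_mul, hy]
    exact Finset.single_le_sum (f := fun j => enormSq (H *ᵥ Vhat j - Z j))
      (fun j _ => enormSq_nonneg _) (Finset.mem_univ k)
  -- case analysis
  have humax : enormSq u ≤ (K:ℝ) * max (M₁^2) (ρ₀⁻¹^2 * cphi⁻¹^2) := by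
    by_cases hcase : Θ ≤ M₁
    · refine le_trans hu_le_y (le_trans hy_le ?_)
      have h13 : Θ^2 ≤ M₁^2 := pow_le_pow_left₀ hΘ0 hcase 2
      have h14 := le_max_left (M₁^2) (ρ₀⁻¹^2 * cphi⁻¹^2)
      nlinarith
    · push_neg at hcase
      have hΘpos : 0 < Θ := lt_trans hM₁ hcase
      have hΞ0 : 0 ≤ Ξ := hΞ ▸ norm_nonneg _
      have h9 : adaptiveInflation cphi M₁ M₂ Θ Ξ = cphi * Θ * (1 + Ξ) := if_pos (Or.inl hcase)
      have h9' : cphi * Θ * (1 + Ξ) ≤ lam := h9 ▸ hlam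
      have hlam1 : cphi * Θ ≤ lam := by nlinarith [mul_pos hcphi hΘpos]
      have hcge : cphi * Θ * ρ₀ ≤ 1 + lam * ρ₀ := by nlinarith
      have h10 : (cphi * Θ * ρ₀)^2 * enormSq u ≤ (K:ℝ) * Θ^2 := by
        calc (cphi * Θ * ρ₀)^2 * enormSq u
            ≤ (1 + lam * ρ₀)^2 * enormSq u :=
              mul_le_mul_of_nonneg_right (pow_le_pow_left₀ (by positivity) hcge 2)
                (enormSq_nonneg u)
          _ ≤ enormSq y := hkey
          _ ≤ (K:ℝ) * Θ^2 := hy_le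
      have h11 : enormSq u ≤ (K:ℝ) * (ρ₀⁻¹^2 * cphi⁻¹^2) := by
        refine le_of_mul_le_mul_left ?_ (show (0:ℝ) < (cphi * Θ * ρ₀)^2 by positivity)
        calc (cphi * Θ * ρ₀)^2 * enormSq u ≤ (K:ℝ) * Θ^2 := h10
          _ = (cphi * Θ * ρ₀)^2 * ((K:ℝ) * (ρ₀⁻¹^2 * cphi⁻¹^2)) := by
              field_simp
      refine le_trans h11 ?_
      have h15 := le_max_right (M₁^2) (ρ₀⁻¹^2 * cphi⁻¹^2)
      nlinarith
  -- final combination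
  have hfin : ∀ i, V k (Sum.inl i) ^ 2 * ρ₀ ≤ (Z k i + u i)^2 := by
    intro i
    have h12 : (h i * V k (Sum.inl i))^2 = (Z k i + u i)^2 := by rw [hXcomp i]
    nlinarith [mul_le_mul_of_nonneg_right (hρle i) (sq_nonneg (V k (Sum.inl i)))]
  have hsumX : enormSq (fun i => V k (Sum.inl i)) * ρ₀ ≤ ∑ i, (Z k i + u i)^2 := by
    rw [enormSq, Finset.sum_mul]
    exact Finset.sum_le_sum fun i _ => hfin i
  have hsplit : ∑ i, (Z k i + u i)^2 ≤ 2 * enormSq (Z k) + 2 * enormSq u := by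
    rw [enormSq, enormSq, Finset.mul_sum, Finset.mul_sum, ← Finset.sum_add_distrib]
    exact Finset.sum_le_sum fun i _ => by nlinarith [sq_nonneg (Z k i - u i)]
  refine le_of_mul_le_mul_right ?_ hρpos
  calc enormSq (fun i => V k (Sum.inl i)) * ρ₀
      ≤ 2 * enormSq (Z k) + 2 * enormSq u := le_trans hsumX hsplit
    _ ≤ 2 * enormSq (Z k) + 2 * ((K:ℝ) * max (M₁^2) (ρ₀⁻¹^2 * cphi⁻¹^2)) := by linarith
    _ = (2 * ρ₀⁻¹ * (K:ℝ) * max (M₁^2) (ρ₀⁻¹^2 * cphi⁻¹^2) + 2 * ρ₀⁻¹ * enormSq (Z k)) * ρ₀ := by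
        field_simp
        ring
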